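/- arXiv:2511.00220 — 6 statements merged into one kernel-verified Lean document; each statement's English description precedes it below -/
import Mathlib

section
/- Let θ_1, …, θ_N ∈ ℝ^d, set ψ = Σ_{i=1}^N w_i θ_i and g = Σ_{i=1}^N w_i ∇L_i(θ_i), and for a stepsize 0 < η ≤ 1/(4L) set ψ⁺ = ψ − η g. Then ‖ψ⁺ − θ*‖² ≤ (1 − ημ)‖ψ − θ*‖² + 6Lη²Δ* + 2 Σ_{i=1}^N w_i ‖ψ − θ_i‖². (Paper's Lemma 1.) -/
open scoped BigOperators RealInnerProductSpace

set_option maxHeartbeats 2000000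


/-- Jensen's inequality for the squared norm. -/
lemma jensen_sq {d N : ℕ} (w : Fin N → ℝ) (hw : ∀ i, 0 ≤ w i)
    (hw1 : ∑ i, w i = 1) (v : Fin N → EuclideanSpace ℝ (Fin d)) :
    ‖∑ i, w i • v i‖ ^ 2 ≤ ∑ i, w i * ‖v i‖ ^ 2 := by
  set m := ∑ i, w i • v i with hm
  have h1 : ‖m‖ ^ 2 = ∑ i, w i * ⟪v i, m⟫ := by
    rw [← real_inner_self_eq_norm_sq, hm, sum_inner]
    simp only [real_inner_smul_left]
  have h3 : ‖m‖ ^ 2 ≤ ∑ i, w i * ((‖v i‖ ^ 2 + ‖m‖ ^ 2) / 2) := by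
    rw [h1]
    refine Finset.sum_le_sum fun i _ => mul_le_mul_of_nonneg_left ?_ (hw i)
    nlinarith [real_inner_le_norm (v i) m, sq_nonneg (‖v i‖ - ‖m‖)]
  have h4 : ∑ i, w i * ((‖v i‖ ^ 2 + ‖m‖ ^ 2) / 2)
      = (∑ i, w i * ‖v i‖ ^ 2) / 2 + (∑ i, w i) * (‖m‖ ^ 2 / 2) := by
    have e : ∀ i ∈ Finset.univ, w i * ((‖v i‖ ^ 2 + ‖m‖ ^ 2) / 2)
        = (w i * ‖v i‖ ^ 2) / 2 + w i * (‖m‖ ^ 2 / 2) := fun i _ => by ring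
    rw [Finset.sum_congr rfl e, Finset.sum_add_distrib, ← Finset.sum_div, ← Finset.sum_mul]
  rw [hw1] at h4
  linarith [h3.trans_eq h4]

lemma grad_sq_le {d : ℕ} (f : EuclideanSpace ℝ (Fin d) → ℝ) (Lc : ℝ) (hLc : 0 < Lc)
    (hsmooth : ∀ x y, f y ≤ f x + ⟪gradient f x, y - x⟫ + Lc / 2 * ‖y - x‖ ^ 2)
    (m : EuclideanSpace ℝ (Fin d)) (hm : ∀ y, f m ≤ f y)
    (x : EuclideanSpace ℝ (Fin d)) :
    ‖gradient f x‖ ^ 2 ≤ 2 * Lc * (f x - f m) := by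
  set gx := gradient f x with hgx
  have h := hsmooth x (x - (1 / Lc) • gx)
  have h2 : x - (1 / Lc) • gx - x = -((1 / Lc) • gx) := by abel
  rw [h2, inner_neg_right, real_inner_smul_right, real_inner_self_eq_norm_sq,
    norm_neg, norm_smul, Real.norm_eq_abs, abs_of_pos (by positivity : (0:ℝ) < 1/Lc),
    ← hgx] at h
  have hmin := hm (x - (1 / Lc) • gx)
  have e : -(1 / Lc * ‖gx‖ ^ 2) + Lc / 2 * (1 / Lc * ‖gx‖) ^ 2 = -(‖gx‖ ^ 2 / (2 * Lc)) := by
    field_simp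
    ring
  have h3 : ‖gx‖ ^ 2 / (2 * Lc) ≤ f x - f m := by linarith [h, hmin, e]
  have h4 := (div_le_iff₀ (by positivity : (0:ℝ) < 2 * Lc)).mp h3
  linarith


/-- Paper's Lemma 1: one averaged gradient step contracts the distance to the
multi-objective optimum, up to a `Δ*` term and the dispersion of the experts. -/
theorem stmt0 {d N : ℕ} (hN : 1 ≤ N)
    (Lf : Fin N → EuclideanSpace ℝ (Fin d) → ℝ)
    (Lc μ : ℝ) (hμ : 0 < μ) (hμL : μ ≤ Lc)
    (hdiff : ∀ i, Differentiable ℝ (Lf i))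
    (hsmooth : ∀ i x y, Lf i y ≤ Lf i x + ⟪gradient (Lf i) x, y - x⟫ + Lc / 2 * ‖y - x‖ ^ 2)
    (hconv : ∀ i x y, Lf i y ≥ Lf i x + ⟪gradient (Lf i) x, y - x⟫ + μ / 2 * ‖y - x‖ ^ 2)
    (w : Fin N → ℝ) (hw : ∀ i, w i ∈ Set.Ioo (0 : ℝ) 1) (hw1 : ∑ i, w i = 1)
    (θstar : EuclideanSpace ℝ (Fin d))
    (hθstar : ∀ x, ∑ i, w i * Lf i θstar ≤ ∑ i, w i * Lf i x)
    (θistar : Fin N → EuclideanSpace ℝ (Fin d))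
    (hθistar : ∀ i x, Lf i (θistar i) ≤ Lf i x)
    (Δstar : ℝ)
    (hΔ : Δstar = (∑ i, w i * Lf i θstar) - ∑ i, w i * Lf i (θistar i))
    (θ : Fin N → EuclideanSpace ℝ (Fin d))
    (ψ g : EuclideanSpace ℝ (Fin d))
    (hψ : ψ = ∑ i, w i • θ i)
    (hg : g = ∑ i, w i • gradient (Lf i) (θ i))
    (η : ℝ) (hη : 0 < η) (hη' : η ≤ 1 / (4 * Lc)) :
    ‖ψ - η • g - θstar‖ ^ 2 ≤
      (1 - η * μ) * ‖ψ - θstar‖ ^ 2 + 6 * Lc * η ^ 2 * Δstar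
        + 2 * ∑ i, w i * ‖ψ - θ i‖ ^ 2 := by
  have hLc : 0 < Lc := lt_of_lt_of_le hμ hμL
  have hwn : ∀ i, 0 ≤ w i := fun i => (hw i).1.le
  have hηLc : η * Lc ≤ 1 / 4 := by
    rw [le_div_iff₀ (by positivity)] at hη'
    nlinarith
  -- basic sums
  set A := ∑ i, w i * ‖ψ - θ i‖ ^ 2 with hA
  set B := ∑ i, w i * ‖gradient (Lf i) (θ i)‖ ^ 2 with hB
  set C := ∑ i, w i * ‖θ i - θstar‖ ^ 2 with hC
  set E := ∑ i, w i * (Lf i (θ i) - Lf i (θistar i)) with hE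
  set P := ∑ i, w i * (Lf i ψ - Lf i (θistar i)) with hP
  set T : ℝ := ⟪ψ - θstar, g⟫ with hT
  -- per-index gradient bound
  have key2 : ∀ i x, ‖gradient (Lf i) x‖ ^ 2 ≤ 2 * Lc * (Lf i x - Lf i (θistar i)) :=
    fun i x => grad_sq_le (Lf i) Lc hLc (hsmooth i) (θistar i) (hθistar i) x
  -- F1 : expansion of the step
  have F1 : ‖ψ - η • g - θstar‖ ^ 2 = ‖ψ - θstar‖ ^ 2 - 2 * η * T + η ^ 2 * ‖g‖ ^ 2 := by
    rw [sub_right_comm, norm_sub_sq_real, real_inner_smul_right, norm_smul,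
      Real.norm_eq_abs]
    rw [mul_pow, sq_abs]
    ring
  -- F2 : Jensen for g
  have F2 : ‖g‖ ^ 2 ≤ B := by
    rw [hg, hB]
    exact jensen_sq w hwn hw1 _
  -- F3 : Jensen for ψ - θstar
  have hψs : ψ - θstar = ∑ i, w i • (θ i - θstar) := by
    rw [hψ]
    simp only [smul_sub, Finset.sum_sub_distrib, ← Finset.sum_smul, hw1, one_smul]
  have F3 : ‖ψ - θstar‖ ^ 2 ≤ C := by
    rw [hψs, hC]
    exact jensen_sq w hwn hw1 _
  -- key1 per index
  have key1 : ∀ i, -(2 * η) * ⟪ψ - θstar, gradient (Lf i) (θ i)⟫ ≤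
      ‖ψ - θ i‖ ^ 2 + η ^ 2 * ‖gradient (Lf i) (θ i)‖ ^ 2
        - 2 * η * (Lf i (θ i) - Lf i θstar) - η * μ * ‖θ i - θstar‖ ^ 2 := by
    intro i
    set gi := gradient (Lf i) (θ i) with hgi
    have hsplit : ⟪ψ - θstar, gi⟫ = ⟪ψ - θ i, gi⟫ + ⟪θ i - θstar, gi⟫ := by
      rw [← inner_add_left]
      congr 1
      abel
    have hq : (0:ℝ) ≤ ‖(ψ - θ i) + η • gi‖ ^ 2 := by positivity
    have hexp : ‖(ψ - θ i) + η • gi‖ ^ 2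
        = ‖ψ - θ i‖ ^ 2 + 2 * (η * ⟪ψ - θ i, gi⟫) + η ^ 2 * ‖gi‖ ^ 2 := by
      rw [norm_add_sq_real, real_inner_smul_right, norm_smul, Real.norm_eq_abs]
      rw [mul_pow, sq_abs]
    have hcv := hconv i (θ i) θstar
    rw [show θstar - θ i = -(θ i - θstar) by abel, inner_neg_right, norm_neg,
      ← hgi] at hcv
    -- hcv : Lf i θstar ≥ Lf i (θ i) + -⟪gi, θ i - θstar⟫ + μ/2 * ‖θ i - θstar‖^2
    have hcomm : ⟪gi, θ i - θstar⟫ = ⟪θ i - θstar, gi⟫ := real_inner_comm _ _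
    rw [hcomm] at hcv
    have hcv2 : Lf i (θ i) - Lf i θstar + μ / 2 * ‖θ i - θstar‖ ^ 2
        ≤ ⟪θ i - θstar, gi⟫ := by linarith
    have hm2 := mul_le_mul_of_nonneg_left hcv2 (by positivity : (0:ℝ) ≤ 2 * η)
    nlinarith [hq, hexp, hsplit, hm2]
  -- key3 per index
  have key3 : ∀ i, -(‖ψ - θ i‖ ^ 2) ≤ 2 * η * (Lf i (θ i) - Lf i (θistar i))
      - 2 * η * (Lf i ψ - Lf i (θistar i))
      + 2 * Lc * η ^ 2 * (Lf i ψ - Lf i (θistar i)) := by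
    intro i
    set gp := gradient (Lf i) ψ with hgp
    have hcv := hconv i ψ (θ i)
    rw [← hgp] at hcv
    have hq : (0:ℝ) ≤ ‖(θ i - ψ) + η • gp‖ ^ 2 := by positivity
    have hexp : ‖(θ i - ψ) + η • gp‖ ^ 2
        = ‖θ i - ψ‖ ^ 2 + 2 * (η * ⟪θ i - ψ, gp⟫) + η ^ 2 * ‖gp‖ ^ 2 := by
      rw [norm_add_sq_real, real_inner_smul_right, norm_smul, Real.norm_eq_abs]
      rw [mul_pow, sq_abs]
    have hg2 := key2 i ψ
    rw [← hgp] at hg2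
    have hg3 := mul_le_mul_of_nonneg_left hg2 (sq_nonneg η)
    have hcomm : ⟪gp, θ i - ψ⟫ = ⟪θ i - ψ, gp⟫ := real_inner_comm _ _
    have hμc : (0:ℝ) ≤ μ / 2 * ‖θ i - ψ‖ ^ 2 := by positivity
    have hnorm2 : ‖θ i - ψ‖ ^ 2 = ‖ψ - θ i‖ ^ 2 := by rw [norm_sub_rev]
    -- from hcv : Lf i (θ i) - Lf i ψ ≥ ⟪gp, θ i - ψ⟫
    have hcv2 : ⟪θ i - ψ, gp⟫ ≤ Lf i (θ i) - Lf i ψ := by linarith [hcv, hcomm]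
    have hm2 := mul_le_mul_of_nonneg_left hcv2 (by positivity : (0:ℝ) ≤ 2 * η)
    nlinarith [hq, hexp, hg3, hm2, hnorm2]
  -- aggregated F4
  have hTsum : T = ∑ i, w i * ⟪ψ - θstar, gradient (Lf i) (θ i)⟫ := by
    rw [hT, hg, inner_sum]
    simp only [real_inner_smul_right]
  have F4 : -(2 * η) * T ≤ A + η ^ 2 * B - 2 * η * E + 2 * η * Δstar - η * μ * C := by
    have hsum := Finset.sum_le_sum
      (fun i (_ : i ∈ Finset.univ) => mul_le_mul_of_nonneg_left (key1 i) (hwn i))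
    have hl : ∑ i, w i * (-(2 * η) * ⟪ψ - θstar, gradient (Lf i) (θ i)⟫)
        = -(2 * η) * T := by
      rw [hTsum, Finset.mul_sum]
      exact Finset.sum_congr rfl fun i _ => by ring
    have hr : ∑ i, w i * (‖ψ - θ i‖ ^ 2 + η ^ 2 * ‖gradient (Lf i) (θ i)‖ ^ 2
          - 2 * η * (Lf i (θ i) - Lf i θstar) - η * μ * ‖θ i - θstar‖ ^ 2)
        = A + η ^ 2 * B - 2 * η * E + 2 * η * Δstar - η * μ * C := by
      rw [hA, hB, hC, hE, hΔ]
      rw [Finset.mul_sum, Finset.mul_sum, Finset.mul_sum, mul_sub, Finset.mul_sum,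
        Finset.mul_sum]
      rw [← Finset.sum_add_distrib, ← Finset.sum_sub_distrib, ← Finset.sum_sub_distrib,
        ← Finset.sum_add_distrib, ← Finset.sum_sub_distrib]
      exact Finset.sum_congr rfl fun i _ => by ring
    rw [← hl, ← hr]
    exact hsum
  -- aggregated F5
  have F5 : B ≤ 2 * Lc * E := by
    rw [hB, hE, Finset.mul_sum]
    exact Finset.sum_le_sum fun i _ => by
      have := mul_le_mul_of_nonneg_left (key2 i (θ i)) (hwn i)
      linarith [this]
  -- aggregated F6
  have F6 : -A ≤ 2 * η * E - 2 * η * P + 2 * Lc * η ^ 2 * P := by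
    have hsum := Finset.sum_le_sum
      (fun i (_ : i ∈ Finset.univ) => mul_le_mul_of_nonneg_left (key3 i) (hwn i))
    have hl : ∑ i, w i * (-(‖ψ - θ i‖ ^ 2)) = -A := by
      rw [hA, ← Finset.sum_neg_distrib]
      exact Finset.sum_congr rfl fun i _ => by ring
    have hr : ∑ i, w i * (2 * η * (Lf i (θ i) - Lf i (θistar i))
          - 2 * η * (Lf i ψ - Lf i (θistar i))
          + 2 * Lc * η ^ 2 * (Lf i ψ - Lf i (θistar i)))
        = 2 * η * E - 2 * η * P + 2 * Lc * η ^ 2 * P := by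
      rw [hE, hP, Finset.mul_sum, Finset.mul_sum, Finset.mul_sum]
      rw [← Finset.sum_sub_distrib, ← Finset.sum_add_distrib]
      exact Finset.sum_congr rfl fun i _ => by ring
    rw [← hl, ← hr]
    exact hsum
  -- F7 : Δstar ≤ P
  have F7 : Δstar ≤ P := by
    have h := hθstar ψ
    have hsplit : P = ∑ i, w i * Lf i ψ - ∑ i, w i * Lf i (θistar i) := by
      rw [hP, ← Finset.sum_sub_distrib]
      exact Finset.sum_congr rfl fun i _ => by ring
    rw [hΔ, hsplit]
    linarith
  -- F8 : 0 ≤ Δstar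
  have F8 : 0 ≤ Δstar := by
    rw [hΔ]
    have := Finset.sum_le_sum
      (fun i (_ : i ∈ Finset.univ) =>
        mul_le_mul_of_nonneg_left (hθistar i θstar) (hwn i))
    linarith
  -- A ≥ 0
  have hA0 : 0 ≤ A := Finset.sum_nonneg fun i _ => mul_nonneg (hwn i) (sq_nonneg _)
  -- final combination
  have g1 : η ^ 2 * ‖g‖ ^ 2 ≤ η ^ 2 * B := mul_le_mul_of_nonneg_left F2 (sq_nonneg η)
  have g3 : η ^ 2 * B ≤ η ^ 2 * (2 * Lc * E) := mul_le_mul_of_nonneg_left F5 (sq_nonneg η)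
  have g4 : η * μ * ‖ψ - θstar‖ ^ 2 ≤ η * μ * C :=
    mul_le_mul_of_nonneg_left F3 (by positivity)
  have hc1 : (0:ℝ) ≤ 1 - 2 * Lc * η := by nlinarith
  have g5 := mul_le_mul_of_nonneg_left F6 hc1
  have hc2 : (0:ℝ) ≤ 2 * η - 6 * Lc * η ^ 2 + 4 * Lc ^ 2 * η ^ 3 := by
    have e : 2 * η - 6 * Lc * η ^ 2 + 4 * Lc ^ 2 * η ^ 3
        = 2 * η * ((1 - 2 * (Lc * η)) * (1 - Lc * η)) := by ring
    rw [e]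
    have h1 : (0:ℝ) ≤ 1 - 2 * (Lc * η) := by nlinarith
    have h2 : (0:ℝ) ≤ 1 - Lc * η := by nlinarith
    positivity
  have g6 := mul_le_mul_of_nonneg_left F7 hc2
  have g7 : (0:ℝ) ≤ 4 * Lc ^ 2 * η ^ 3 * Δstar := by
    apply mul_nonneg _ F8
    positivity
  have gA : (0:ℝ) ≤ 2 * Lc * η * A := by
    apply mul_nonneg _ hA0
    positivity
  rw [F1]
  ring_nf at g1 g3 g4 g5 g6 g7 gA F4 ⊢
  linarith [g1, g3, g4, g5, g6, g7, gA, F4]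
end

section
/- Let θ_1, …, θ_N ∈ ℝ^d, ψ = Σ_{i=1}^N w_i θ_i, and let η > 0. Then Σ_{i=1}^N w_i (L_i(θ_i) − L_i(θ*)) ≥ −Σ_{i=1}^N w_i ( ηL (L_i(ψ) − L_i(θ_i*)) + (1/(2η))‖θ_i − ψ‖² ) + (L(ψ) − L(θ*)). -/
open scoped BigOperators RealInnerProductSpace

/-- Lower bound on the weighted suboptimality of the experts in terms of the
suboptimality of the average ψ. -/
theorem stmt3 {d N : ℕ} (hN : 1 ≤ N)
    (Lf : Fin N → EuclideanSpace ℝ (Fin d) → ℝ)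
    (Lc μ : ℝ) (hμ : 0 < μ) (hμL : μ ≤ Lc)
    (hdiff : ∀ i, Differentiable ℝ (Lf i))
    (hsmooth : ∀ i x y, Lf i y ≤ Lf i x + ⟪gradient (Lf i) x, y - x⟫ + Lc / 2 * ‖y - x‖ ^ 2)
    (hconv : ∀ i x y, Lf i y ≥ Lf i x + ⟪gradient (Lf i) x, y - x⟫ + μ / 2 * ‖y - x‖ ^ 2)
    (w : Fin N → ℝ) (hw : ∀ i, w i ∈ Set.Ioo (0 : ℝ) 1) (hw1 : ∑ i, w i = 1)
    (θstar : EuclideanSpace ℝ (Fin d))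
    (hθstar : ∀ x, ∑ i, w i * Lf i θstar ≤ ∑ i, w i * Lf i x)
    (θistar : Fin N → EuclideanSpace ℝ (Fin d))
    (hθistar : ∀ i x, Lf i (θistar i) ≤ Lf i x)
    (θ : Fin N → EuclideanSpace ℝ (Fin d))
    (ψ : EuclideanSpace ℝ (Fin d)) (hψ : ψ = ∑ i, w i • θ i)
    (η : ℝ) (hη : 0 < η) :
    ∑ i, w i * (Lf i (θ i) - Lf i θstar) ≥
      -(∑ i, w i * (η * Lc * (Lf i ψ - Lf i (θistar i)) + 1 / (2 * η) * ‖θ i - ψ‖ ^ 2))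
        + ((∑ i, w i * Lf i ψ) - ∑ i, w i * Lf i θstar) := by
  have hLc : (0:ℝ) < Lc := lt_of_lt_of_le hμ hμL
  have key : ∀ i, 0 ≤ w i * (Lf i (θ i) - Lf i ψ) +
      w i * (η * Lc * (Lf i ψ - Lf i (θistar i)) + 1 / (2 * η) * ‖θ i - ψ‖ ^ 2) := by
    intro i
    set g := gradient (Lf i) ψ with hg
    set v := θ i - ψ with hv
    -- Step A : ‖g‖² ≤ 2 Lc (Lf i ψ - Lf i (θistar i))
    have h1 := hsmooth i ψ (ψ - Lc⁻¹ • g)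
    have e1 : ψ - Lc⁻¹ • g - ψ = -(Lc⁻¹ • g) := by abel
    rw [e1] at h1
    have e2 : ⟪g, -(Lc⁻¹ • g)⟫ = -(Lc⁻¹ * ‖g‖ ^ 2) := by
      rw [inner_neg_right, real_inner_smul_right, real_inner_self_eq_norm_sq]
    have e3 : ‖-(Lc⁻¹ • g)‖ ^ 2 = Lc⁻¹ ^ 2 * ‖g‖ ^ 2 := by
      rw [norm_neg, norm_smul, Real.norm_eq_abs, abs_of_pos (inv_pos.mpr hLc), mul_pow]
    rw [e2, e3] at h1
    have h2 := hθistar i (ψ - Lc⁻¹ • g)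
    have hA : ‖g‖ ^ 2 ≤ 2 * Lc * (Lf i ψ - Lf i (θistar i)) := by
      have hLcne : Lc ≠ 0 := ne_of_gt hLc
      have hc : Lf i ψ + -(Lc⁻¹ * ‖g‖ ^ 2) + Lc / 2 * (Lc⁻¹ ^ 2 * ‖g‖ ^ 2)
          = Lf i ψ - ‖g‖ ^ 2 / (2 * Lc) := by field_simp; ring
      rw [hc] at h1
      have := le_trans h2 h1
      have h2Lc : (0:ℝ) < 2 * Lc := by linarith
      have hdiv : ‖g‖ ^ 2 / (2 * Lc) ≤ Lf i ψ - Lf i (θistar i) := by linarith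
      rw [div_le_iff₀ h2Lc] at hdiv
      nlinarith [hdiv]
    -- Step B : Young's inequality
    have hB : ⟪g, v⟫ ≥ -(η / 2 * ‖g‖ ^ 2) - 1 / (2 * η) * ‖v‖ ^ 2 := by
      have habs := abs_real_inner_le_norm g v
      have hprod : ‖g‖ * ‖v‖ ≤ η / 2 * ‖g‖ ^ 2 + 1 / (2 * η) * ‖v‖ ^ 2 := by
        have h2η : (0:ℝ) < 2 * η := by linarith
        rw [← sub_nonneg]
        have hc : η / 2 * ‖g‖ ^ 2 + 1 / (2 * η) * ‖v‖ ^ 2 - ‖g‖ * ‖v‖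
            = (η * ‖g‖ - ‖v‖) ^ 2 / (2 * η) := by field_simp; ring
        rw [hc]
        positivity
      have : -⟪g, v⟫ ≤ ‖g‖ * ‖v‖ := by
        have := neg_abs_le (⟪g, v⟫ : ℝ); linarith [habs]
      linarith
    -- Step C : convexity
    have hC := hconv i ψ (θ i)
    rw [← hv] at hC
    have hμv : 0 ≤ μ / 2 * ‖v‖ ^ 2 := by positivity
    have hA' : η / 2 * ‖g‖ ^ 2 ≤ η * Lc * (Lf i ψ - Lf i (θistar i)) := by
      have := mul_le_mul_of_nonneg_left hA (le_of_lt (half_pos hη))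
      nlinarith [this]
    have hwi : 0 < w i := (hw i).1
    have hmain : 0 ≤ Lf i (θ i) - Lf i ψ +
        (η * Lc * (Lf i ψ - Lf i (θistar i)) + 1 / (2 * η) * ‖v‖ ^ 2) := by
      linarith
    have := mul_nonneg hwi.le hmain
    linear_combination this
  have hsum : 0 ≤ ∑ i, (w i * (Lf i (θ i) - Lf i ψ) +
      w i * (η * Lc * (Lf i ψ - Lf i (θistar i)) + 1 / (2 * η) * ‖θ i - ψ‖ ^ 2)) :=
    Finset.sum_nonneg fun i _ => key i
  rw [Finset.sum_add_distrib] at hsum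
  have e1 : ∑ i, w i * (Lf i (θ i) - Lf i θstar)
      = ∑ i, w i * Lf i (θ i) - ∑ i, w i * Lf i θstar := by
    simp [mul_sub, Finset.sum_sub_distrib]
  have e2 : ∑ i, w i * (Lf i (θ i) - Lf i ψ)
      = ∑ i, w i * Lf i (θ i) - ∑ i, w i * Lf i ψ := by
    simp [mul_sub, Finset.sum_sub_distrib]
  rw [e2] at hsum
  rw [e1]
  linarith
end

section
/- Let θ_1, …, θ_N ∈ ℝ^d, ψ = Σ_{i=1}^N w_i θ_i, and let 0 < η ≤ 1/(4L). Then −2η(1 − 2ηL) Σ_{i=1}^N w_i (L_i(θ_i) − L_i(θ*)) ≤ 2η²L Δ* + Σ_{i=1}^N w_i ‖θ_i − ψ‖². -/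
open scoped BigOperators RealInnerProductSpace

set_option maxHeartbeats 1000000 in
/-- −2η(1 − 2ηL) Σ wᵢ (Lᵢ(θᵢ) − Lᵢ(θ*)) ≤ 2η²L Δ* + Σ wᵢ ‖θᵢ − ψ‖². -/
theorem stmt4 {d N : ℕ} (hN : 1 ≤ N)
    (Lf : Fin N → EuclideanSpace ℝ (Fin d) → ℝ)
    (Lc μ : ℝ) (hμ : 0 < μ) (hμL : μ ≤ Lc)
    (hdiff : ∀ i, Differentiable ℝ (Lf i))
    (hsmooth : ∀ i x y, Lf i y ≤ Lf i x + ⟪gradient (Lf i) x, y - x⟫ + Lc / 2 * ‖y - x‖ ^ 2)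
    (hconv : ∀ i x y, Lf i y ≥ Lf i x + ⟪gradient (Lf i) x, y - x⟫ + μ / 2 * ‖y - x‖ ^ 2)
    (w : Fin N → ℝ) (hw : ∀ i, w i ∈ Set.Ioo (0 : ℝ) 1) (hw1 : ∑ i, w i = 1)
    (θstar : EuclideanSpace ℝ (Fin d))
    (hθstar : ∀ x, ∑ i, w i * Lf i θstar ≤ ∑ i, w i * Lf i x)
    (θistar : Fin N → EuclideanSpace ℝ (Fin d))
    (hθistar : ∀ i x, Lf i (θistar i) ≤ Lf i x)
    (Δstar : ℝ)
    (hΔ : Δstar = (∑ i, w i * Lf i θstar) - ∑ i, w i * Lf i (θistar i))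
    (θ : Fin N → EuclideanSpace ℝ (Fin d))
    (ψ : EuclideanSpace ℝ (Fin d)) (hψ : ψ = ∑ i, w i • θ i)
    (η : ℝ) (hη : 0 < η) (hη' : η ≤ 1 / (4 * Lc)) :
    -(2 * η * (1 - 2 * η * Lc)) * ∑ i, w i * (Lf i (θ i) - Lf i θstar) ≤
      2 * η ^ 2 * Lc * Δstar + ∑ i, w i * ‖θ i - ψ‖ ^ 2 := by
  have hLc : 0 < Lc := lt_of_lt_of_le hμ hμL
  have hηLc : 2 * η * Lc ≤ 1 / 2 := by
    rw [le_div_iff₀ (by positivity : (0:ℝ) < 4 * Lc)] at hη'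
    nlinarith
  set c : ℝ := 2 * η * (1 - 2 * η * Lc) with hc
  have hc0 : 0 ≤ c := by nlinarith
  have hc2η : c ≤ 2 * η := by
    rw [hc]
    nlinarith [mul_nonneg (mul_nonneg hη.le hη.le) hLc.le]
  have hcLc : c * Lc ≤ 1 / 2 := by nlinarith [mul_le_mul_of_nonneg_right hc2η hLc.le]
  clear_value c
  clear hc
  -- PL-type bound: ‖∇Lᵢ(x)‖² ≤ 2 Lc (Lᵢ(x) − Lᵢ(θᵢ*))
  have hPL : ∀ i x, ‖gradient (Lf i) x‖ ^ 2 ≤ 2 * Lc * (Lf i x - Lf i (θistar i)) := by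
    intro i x
    have h1 := hsmooth i x (x - Lc⁻¹ • gradient (Lf i) x)
    have h2 := hθistar i (x - Lc⁻¹ • gradient (Lf i) x)
    rw [sub_sub_cancel_left, inner_neg_right, real_inner_smul_right,
      real_inner_self_eq_norm_sq, norm_neg, norm_smul, mul_pow,
      Real.norm_eq_abs, abs_of_pos (by positivity : (0:ℝ) < Lc⁻¹)] at h1
    have heq : Lc / 2 * (Lc⁻¹ ^ 2 * ‖gradient (Lf i) x‖ ^ 2)
        = Lc⁻¹ / 2 * ‖gradient (Lf i) x‖ ^ 2 := by
      field_simp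
    rw [heq] at h1
    have h4 : Lc⁻¹ / 2 * ‖gradient (Lf i) x‖ ^ 2 ≤ Lf i x - Lf i (θistar i) := by
      linarith
    calc ‖gradient (Lf i) x‖ ^ 2
        = 2 * Lc * (Lc⁻¹ / 2 * ‖gradient (Lf i) x‖ ^ 2) := by
          field_simp
      _ ≤ 2 * Lc * (Lf i x - Lf i (θistar i)) :=
          mul_le_mul_of_nonneg_left h4 (by positivity)
  -- per-index inequality
  have hkey : ∀ i, c * (Lf i ψ - Lf i (θ i)) ≤
      c ^ 2 * Lc / 2 * (Lf i ψ - Lf i (θistar i)) + ‖θ i - ψ‖ ^ 2 := by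
    intro i
    have hcv := hconv i ψ (θ i)
    have hip := real_inner_le_norm (gradient (Lf i) ψ) (ψ - θ i)
    have hneg : (⟪gradient (Lf i) ψ, ψ - θ i⟫ : ℝ)
        = - ⟪gradient (Lf i) ψ, θ i - ψ⟫ := by
      rw [← neg_sub, inner_neg_right]
    have hnrm : ‖ψ - θ i‖ = ‖θ i - ψ‖ := norm_sub_rev _ _
    rw [hneg, hnrm] at hip
    have hμ0 : 0 ≤ μ / 2 * ‖θ i - ψ‖ ^ 2 := by positivity
    have h1 : Lf i ψ - Lf i (θ i) ≤ ‖gradient (Lf i) ψ‖ * ‖θ i - ψ‖ := by linarith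
    have h4 : c * (Lf i ψ - Lf i (θ i))
        ≤ c * (‖gradient (Lf i) ψ‖ * ‖θ i - ψ‖) := mul_le_mul_of_nonneg_left h1 hc0
    have h2 : c * (‖gradient (Lf i) ψ‖ * ‖θ i - ψ‖)
        ≤ c ^ 2 / 4 * ‖gradient (Lf i) ψ‖ ^ 2 + ‖θ i - ψ‖ ^ 2 := by
      nlinarith [sq_nonneg (c * ‖gradient (Lf i) ψ‖ / 2 - ‖θ i - ψ‖)]
    have h5 := mul_le_mul_of_nonneg_left (hPL i ψ) (by positivity : (0:ℝ) ≤ c ^ 2 / 4)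
    have h6 : c ^ 2 / 4 * (2 * Lc * (Lf i ψ - Lf i (θistar i)))
        = c ^ 2 * Lc / 2 * (Lf i ψ - Lf i (θistar i)) := by ring
    linarith [h4, h2, h5, h6]
  -- sums
  set Sψ := ∑ i, w i * Lf i ψ with hSψ
  set Sθ := ∑ i, w i * Lf i (θ i) with hSθ
  set Ss := ∑ i, w i * Lf i θstar with hSs
  set Si := ∑ i, w i * Lf i (θistar i) with hSi
  set T := ∑ i, w i * ‖θ i - ψ‖ ^ 2 with hT
  have hwpos : ∀ i : Fin N, 0 ≤ w i := fun i => (hw i).1.le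
  have hsum : c * (Sψ - Sθ) ≤ c ^ 2 * Lc / 2 * (Sψ - Si) + T := by
    have h := Finset.sum_le_sum (fun i (_ : i ∈ Finset.univ) =>
      mul_le_mul_of_nonneg_left (hkey i) (hwpos i))
    calc c * (Sψ - Sθ) = ∑ i, w i * (c * (Lf i ψ - Lf i (θ i))) := by
          simp only [hSψ, hSθ, Finset.mul_sum, ← Finset.sum_sub_distrib]
          exact Finset.sum_congr rfl (fun i _ => by ring)
      _ ≤ ∑ i, w i * (c ^ 2 * Lc / 2 * (Lf i ψ - Lf i (θistar i)) + ‖θ i - ψ‖ ^ 2) := h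
      _ = c ^ 2 * Lc / 2 * (Sψ - Si) + T := by
          simp only [hSψ, hSi, hT, Finset.mul_sum, ← Finset.sum_sub_distrib,
            ← Finset.sum_add_distrib]
          exact Finset.sum_congr rfl (fun i _ => by ring)
  have hA : Ss ≤ Sψ := hθstar ψ
  have hΔ0 : Si ≤ Ss :=
    Finset.sum_le_sum (fun i _ => mul_le_mul_of_nonneg_left (hθistar i θstar) (hwpos i))
  have hT0 : 0 ≤ T :=
    Finset.sum_nonneg (fun i _ => mul_nonneg (hwpos i) (sq_nonneg _))
  have hgoal : ∑ i, w i * (Lf i (θ i) - Lf i θstar) = Sθ - Ss := by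
    simp only [hSθ, hSs, ← Finset.sum_sub_distrib]
    exact Finset.sum_congr rfl (fun i _ => by ring)
  rw [hgoal, hΔ]
  clear_value Sψ Sθ Ss Si T
  clear hsmooth hconv hdiff hθistar hθstar hkey hPL hψ hw hw1 hΔ hgoal hSψ hSθ hSs hSi hT θ θstar θistar ψ Lf hwpos w hμL hμ μ hN
  have h1 : c ^ 2 * Lc / 2 ≤ c := by nlinarith [mul_le_mul_of_nonneg_left hcLc hc0]
  have h2 : c ^ 2 * Lc / 2 ≤ 2 * η ^ 2 * Lc := by
    have hsq : c * c ≤ 2 * η * (2 * η) :=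
      mul_le_mul hc2η hc2η hc0 (by positivity)
    nlinarith [mul_le_mul_of_nonneg_right hsq hLc.le]
  nlinarith [mul_nonneg (sub_nonneg.2 h1) (sub_nonneg.2 hA),
    mul_nonneg (sub_nonneg.2 h2) (sub_nonneg.2 hΔ0)]
end

section
/- Assume uniform weights w_i = 1/N with N ≥ 2 and 1 ≤ M ≤ N. Fix m ≥ 1 and a nonincreasing positive stepsize sequence (η_τ) with η_τ ≤ 2η_{τ+m} for all τ. Suppose all experts coincide at step t′ (θ_{i,t′} = ψ_{t′} for all i), evolve for t′ ≤ τ ≤ t by θ_{i,τ+1} = θ_{i,τ} − η_τ ∇L_i(θ_{i,τ}), with t + 1 − t′ ≤ m, and let S be a uniformly random M-element subset of {1,…,N}. With ρ_{t+1} = (1/M) Σ_{i∈S} θ_{i,t+1} and ψ_{t+1} = (1/N) Σ_{i=1}^N θ_{i,t+1}, it holds that E‖ρ_{t+1} − ψ_{t+1}‖² ≤ (4N/(M(N−1))) (1 − M/N) η_t² m² G². -/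
open scoped BigOperators
open Finset

private lemma count_superset12 {α : Type*} [Fintype α] [DecidableEq α] (T : Finset α) (M : ℕ)
    (hT : T.card ≤ M) :
    ((Finset.univ.powersetCard M).filter (fun S => T ⊆ S)).card
      = (Fintype.card α - T.card).choose (M - T.card) := by
  have hcard : ((Finset.univ : Finset α) \ T).card = Fintype.card α - T.card := by
    rw [Finset.card_sdiff_of_subset (Finset.subset_univ T), Finset.card_univ]
  rw [← hcard, ← Finset.card_powersetCard]
  apply Finset.card_bij' (fun S _ => S \ T) (fun U _ => U ∪ T)
  · intro S hS
    simp only [Finset.mem_filter, Finset.mem_powersetCard] at hS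
    obtain ⟨⟨_, hScard⟩, hTS⟩ := hS
    simp only [Finset.mem_powersetCard]
    exact ⟨Finset.sdiff_subset_sdiff (Finset.subset_univ S) le_rfl,
      by rw [Finset.card_sdiff_of_subset hTS, hScard]⟩
  · intro U hU
    simp only [Finset.mem_powersetCard] at hU
    obtain ⟨hUsub, hUcard⟩ := hU
    have hdisj : Disjoint U T := Finset.disjoint_of_subset_left hUsub Finset.sdiff_disjoint
    simp only [Finset.mem_filter, Finset.mem_powersetCard]
    refine ⟨⟨Finset.subset_univ _, ?_⟩, Finset.subset_union_right⟩
    rw [Finset.card_union_of_disjoint hdisj, hUcard, Nat.sub_add_cancel hT]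
  · intro S hS
    simp only [Finset.mem_filter] at hS
    exact Finset.sdiff_union_of_subset hS.2
  · intro U hU
    simp only [Finset.mem_powersetCard] at hU
    exact Finset.union_sdiff_cancel_right
      (Finset.disjoint_of_subset_left hU.1 Finset.sdiff_disjoint)

private lemma key_sum12 {α : Type*} [Fintype α] [DecidableEq α] {E : Type*} [NormedAddCommGroup E]
    [InnerProductSpace ℝ E] (y : α → E) (M : ℕ) (C1 c2 : ℝ)
    (hcount : ∀ i j : α,
      ((((Finset.univ : Finset α).powersetCard M).filter (fun S => i ∈ S ∧ j ∈ S)).card : ℝ)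
        = if i = j then C1 else c2)
    (hsum : ∑ i, y i = 0) :
    ∑ S ∈ (Finset.univ : Finset α).powersetCard M, ‖∑ i ∈ S, y i‖ ^ 2
      = (C1 - c2) * ∑ i, ‖y i‖ ^ 2 := by
  set P := (Finset.univ : Finset α).powersetCard M with hP
  calc ∑ S ∈ P, ‖∑ i ∈ S, y i‖ ^ 2
      = ∑ S ∈ P, ∑ i, ∑ j, (if i ∈ S ∧ j ∈ S then (inner ℝ (y i) (y j) : ℝ) else 0) := by
        refine Finset.sum_congr rfl fun S _ => ?_
        have h1 : ∀ f : α → ℝ, ∑ i : α, (if i ∈ S then f i else 0) = ∑ i ∈ S, f i := by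
          intro f; rw [Finset.sum_ite_mem, Finset.univ_inter]
        have hexp : ‖∑ i ∈ S, y i‖ ^ 2 = ∑ i ∈ S, ∑ j ∈ S, (inner ℝ (y i) (y j) : ℝ) := by
          rw [← real_inner_self_eq_norm_sq, sum_inner]
          exact Finset.sum_congr rfl fun i _ => inner_sum _ _ _
        rw [hexp, eq_comm]
        calc ∑ i : α, ∑ j : α, (if i ∈ S ∧ j ∈ S then (inner ℝ (y i) (y j) : ℝ) else 0)
            = ∑ i : α, (if i ∈ S then
                ∑ j : α, (if j ∈ S then (inner ℝ (y i) (y j) : ℝ) else 0) else 0) := by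
              refine Finset.sum_congr rfl fun i _ => ?_
              by_cases hi : i ∈ S <;> simp [hi]
          _ = ∑ i ∈ S, ∑ j ∈ S, (inner ℝ (y i) (y j) : ℝ) := by
              rw [h1 (fun i => ∑ j : α, (if j ∈ S then (inner ℝ (y i) (y j) : ℝ) else 0))]
              exact Finset.sum_congr rfl fun i _ => h1 _
    _ = ∑ i, ∑ j, ((P.filter (fun S => i ∈ S ∧ j ∈ S)).card : ℝ) * (inner ℝ (y i) (y j) : ℝ) := by
        rw [Finset.sum_comm]
        refine Finset.sum_congr rfl fun i _ => ?_
        rw [Finset.sum_comm]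
        refine Finset.sum_congr rfl fun j _ => ?_
        rw [← Finset.sum_filter, Finset.sum_const, nsmul_eq_mul]
    _ = (C1 - c2) * ∑ i, ‖y i‖ ^ 2 := by
        rw [Finset.mul_sum]
        refine Finset.sum_congr rfl fun i _ => ?_
        have hzero : ∑ j : α, (inner ℝ (y i) (y j) : ℝ) = 0 := by
          rw [← inner_sum, hsum, inner_zero_right]
        have hsplit : ∑ j : α,
            ((P.filter (fun S => i ∈ S ∧ j ∈ S)).card : ℝ) * (inner ℝ (y i) (y j) : ℝ)
            = ((P.filter (fun S => i ∈ S ∧ i ∈ S)).card : ℝ) * (inner ℝ (y i) (y i) : ℝ)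
              + ∑ j ∈ Finset.univ.erase i,
                ((P.filter (fun S => i ∈ S ∧ j ∈ S)).card : ℝ) * (inner ℝ (y i) (y j) : ℝ) := by
          exact (Finset.add_sum_erase _ _ (Finset.mem_univ i)).symm
        rw [hsplit, hcount i i, if_pos rfl]
        have herase : ∑ j ∈ Finset.univ.erase i,
            ((P.filter (fun S => i ∈ S ∧ j ∈ S)).card : ℝ) * (inner ℝ (y i) (y j) : ℝ)
            = c2 * ∑ j ∈ Finset.univ.erase i, (inner ℝ (y i) (y j) : ℝ) := by
          rw [Finset.mul_sum]
          refine Finset.sum_congr rfl fun j hj => ?_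
          rw [hcount i j, if_neg (Ne.symm (Finset.ne_of_mem_erase hj))]
        rw [herase]
        have hers : ∑ j ∈ Finset.univ.erase i, (inner ℝ (y i) (y j) : ℝ)
            = - (inner ℝ (y i) (y i) : ℝ) := by
          have := Finset.sum_erase_add Finset.univ (fun j => (inner ℝ (y i) (y j) : ℝ))
            (Finset.mem_univ i)
          rw [hzero] at this
          linarith
        rw [hers, real_inner_self_eq_norm_sq]
        ring

private lemma chooseA12 (N M : ℕ) (hN : 1 ≤ N) (hM1 : 1 ≤ M) :
    (N : ℝ) * ((N - 1).choose (M - 1) : ℝ) = (M : ℝ) * (N.choose M : ℝ) := by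
  have h := Nat.add_one_mul_choose_eq (N - 1) (M - 1)
  have h1 : N - 1 + 1 = N := by omega
  have h2 : M - 1 + 1 = M := by omega
  rw [h1, h2] at h
  have := congrArg (Nat.cast : ℕ → ℝ) h
  push_cast at this
  linarith

private lemma chooseB12 (N M : ℕ) (hN : 2 ≤ N) (hM1 : 1 ≤ M) (hMN : M ≤ N) :
    (N : ℝ) * ((N : ℝ) - 1) * (if 2 ≤ M then ((N - 2).choose (M - 2) : ℝ) else 0)
      = (M : ℝ) * ((M : ℝ) - 1) * (N.choose M : ℝ) := by
  by_cases h2 : 2 ≤ M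
  · have h := Nat.add_one_mul_choose_eq (N - 2) (M - 2)
    have h1 : N - 2 + 1 = N - 1 := by omega
    have h2' : M - 2 + 1 = M - 1 := by omega
    rw [h1, h2'] at h
    have hcast := congrArg (Nat.cast : ℕ → ℝ) h
    push_cast [Nat.cast_sub (by omega : 1 ≤ N), Nat.cast_sub (by omega : 1 ≤ M)] at hcast
    rw [if_pos h2]
    have hA := chooseA12 N M (by omega) hM1
    nlinarith [hcast, hA]
  · have hM1' : M = 1 := by omega
    rw [if_neg h2, hM1']
    push_cast
    ring

private lemma coefEq12 (N M : ℕ) (hN : 2 ≤ N) (hM1 : 1 ≤ M) (hMN : M ≤ N) :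
    ((N.choose M : ℝ))⁻¹ * (((M : ℝ)⁻¹) ^ 2 * (((N - 1).choose (M - 1) : ℝ)
        - (if 2 ≤ M then ((N - 2).choose (M - 2) : ℝ) else 0)))
      = ((N : ℝ) - (M : ℝ)) / ((M : ℝ) * (N : ℝ) * ((N : ℝ) - 1)) := by
  have hA := chooseA12 N M (by omega) hM1
  have hB := chooseB12 N M hN hM1 hMN
  have hCn : (0 : ℝ) < (N.choose M : ℝ) := by exact_mod_cast Nat.choose_pos hMN
  have hMR : (0 : ℝ) < M := by exact_mod_cast hM1
  have hNR : (0 : ℝ) < N := by positivity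
  have hN1 : (0 : ℝ) < (N : ℝ) - 1 := by
    have : (2 : ℝ) ≤ N := by exact_mod_cast hN
    linarith
  have hMne : (M : ℝ) ≠ 0 := ne_of_gt hMR
  have hNne : (N : ℝ) ≠ 0 := ne_of_gt hNR
  have hCne : (N.choose M : ℝ) ≠ 0 := ne_of_gt hCn
  have hN1ne : (N : ℝ) - 1 ≠ 0 := ne_of_gt hN1
  field_simp
  linear_combination ((N : ℝ) - 1) * hA - hB

private lemma finalEq12 (n MR mR a G : ℝ) (hM : MR ≠ 0) (hn : n ≠ 0) (hn1 : n - 1 ≠ 0) :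
    ((n - MR) / (MR * n * (n - 1))) * (n * (mR * (2 * a * G)) ^ 2)
      = 4 * n / (MR * (n - 1)) * (1 - MR / n) * a ^ 2 * mR ^ 2 * G ^ 2 := by
  field_simp
  ring

set_option maxHeartbeats 1000000 in
/-- Expected deviation of the subsampled merged parameter from the full average:
E‖ρ_{t+1} − ψ_{t+1}‖² ≤ (4N/(M(N−1)))(1 − M/N) η_t² m² G². -/
theorem stmt12 {d N : ℕ} (hN : 2 ≤ N) (M : ℕ) (hM1 : 1 ≤ M) (hMN : M ≤ N)
    (Lf : Fin N → EuclideanSpace ℝ (Fin d) → ℝ)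
    (hdiff : ∀ i, Differentiable ℝ (Lf i))
    (G : ℝ) (hG : ∀ i x, ‖gradient (Lf i) x‖ ≤ G)
    (m : ℕ) (hm : 1 ≤ m)
    (η : ℕ → ℝ) (hηpos : ∀ τ, 0 < η τ) (hηmono : ∀ τ₁ τ₂, τ₁ ≤ τ₂ → η τ₂ ≤ η τ₁)
    (hη2 : ∀ τ, η τ ≤ 2 * η (τ + m))
    (θ : ℕ → Fin N → EuclideanSpace ℝ (Fin d))
    (t' t : ℕ) (ht't : t' ≤ t + 1) (htm : t + 1 - t' ≤ m)
    (ψ' : EuclideanSpace ℝ (Fin d)) (hcoincide : ∀ i, θ t' i = ψ')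
    (hevol : ∀ τ, t' ≤ τ → τ ≤ t →
      ∀ i, θ (τ + 1) i = θ τ i - η τ • gradient (Lf i) (θ τ i)) :
    (((Finset.univ : Finset (Fin N)).powersetCard M).card : ℝ)⁻¹ *
        ∑ S ∈ (Finset.univ : Finset (Fin N)).powersetCard M,
          ‖((M : ℝ)⁻¹ • ∑ i ∈ S, θ (t + 1) i) -
              (N : ℝ)⁻¹ • ∑ i, θ (t + 1) i‖ ^ 2
      ≤ 4 * (N : ℝ) / ((M : ℝ) * ((N : ℝ) - 1)) * (1 - (M : ℝ) / (N : ℝ)) *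
          η t ^ 2 * (m : ℝ) ^ 2 * G ^ 2 := by
  have hNR : (0 : ℝ) < N := by positivity
  have hMR : (0 : ℝ) < M := by exact_mod_cast hM1
  have hMne : (M : ℝ) ≠ 0 := ne_of_gt hMR
  have hNne : (N : ℝ) ≠ 0 := ne_of_gt hNR
  have hN1 : (0 : ℝ) < (N : ℝ) - 1 := by
    have : (2 : ℝ) ≤ N := by exact_mod_cast hN
    linarith
  have hGnn : 0 ≤ G := le_trans (norm_nonneg _) (hG ⟨0, by omega⟩ 0)
  set x : Fin N → EuclideanSpace ℝ (Fin d) := fun i => θ (t + 1) i with hx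
  set ψ : EuclideanSpace ℝ (Fin d) := (N : ℝ)⁻¹ • ∑ i, x i with hψ
  set y : Fin N → EuclideanSpace ℝ (Fin d) := fun i => x i - ψ with hy
  -- sum of y is zero
  have hsum0 : ∑ i, y i = 0 := by
    simp only [hy, Finset.sum_sub_distrib, Finset.sum_const, Finset.card_univ, Fintype.card_fin]
    rw [hψ, ← Nat.cast_smul_eq_nsmul ℝ, smul_smul, mul_inv_cancel₀ hNne, one_smul, sub_self]
  -- stepsize bound
  have hηb : ∀ τ, t' ≤ τ → η τ ≤ 2 * η t := by
    intro τ hτ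
    have h1 : η τ ≤ η t' := hηmono t' τ hτ
    have h2 : η t' ≤ η (t + 1 - m) := hηmono (t + 1 - m) t' (by omega)
    have h3 : η (t + 1 - m) ≤ 2 * η (t + 1 - m + m) := hη2 _
    have h4 : η (t + 1 - m + m) ≤ η t := by
      -- wrong direction? need η at larger index ≤ η t
      exact hηmono t (t + 1 - m + m) (by omega)
    linarith
  -- gradient descent distance bound
  have hgd : ∀ τ, t' ≤ τ → τ ≤ t + 1 → ∀ i, ‖θ τ i - ψ'‖ ≤ ((τ - t' : ℕ) : ℝ) * (2 * η t * G) := by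
    intro τ
    induction τ with
    | zero => intro h1 h2 i; have : t' = 0 := by omega
              simp [this ▸ hcoincide i, this]
    | succ τ ih =>
      intro h1 h2 i
      by_cases hcase : t' = τ + 1
      · simp [← hcase, hcoincide i]
      · have ht'τ : t' ≤ τ := by omega
        have hτt : τ ≤ t := by omega
        have hprev := ih ht'τ (by omega) i
        have hstep := hevol τ ht'τ hτt i
        have : θ (τ + 1) i - ψ' = (θ τ i - ψ') - η τ • gradient (Lf i) (θ τ i) := by
          rw [hstep]; abel
        rw [this]
        have hnrm : ‖(θ τ i - ψ') - η τ • gradient (Lf i) (θ τ i)‖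
            ≤ ‖θ τ i - ψ'‖ + ‖η τ • gradient (Lf i) (θ τ i)‖ := norm_sub_le _ _
        have hsm : ‖η τ • gradient (Lf i) (θ τ i)‖ ≤ 2 * η t * G := by
          rw [norm_smul, Real.norm_eq_abs, abs_of_pos (hηpos τ)]
          have := hG i (θ τ i)
          have hη' := hηb τ ht'τ
          have hηt : 0 < η t := hηpos t
          nlinarith [norm_nonneg (gradient (Lf i) (θ τ i)), hηpos τ]
        have hcast : ((τ + 1 - t' : ℕ) : ℝ) = ((τ - t' : ℕ) : ℝ) + 1 := by
          have : τ + 1 - t' = (τ - t') + 1 := by omega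
          rw [this]; push_cast; ring
        rw [hcast]
        calc ‖(θ τ i - ψ') - η τ • gradient (Lf i) (θ τ i)‖
            ≤ ‖θ τ i - ψ'‖ + ‖η τ • gradient (Lf i) (θ τ i)‖ := hnrm
          _ ≤ ((τ - t' : ℕ) : ℝ) * (2 * η t * G) + 2 * η t * G := by linarith
          _ = (((τ - t' : ℕ) : ℝ) + 1) * (2 * η t * G) := by ring
  have hxb : ∀ i, ‖x i - ψ'‖ ≤ (m : ℝ) * (2 * η t * G) := by
    intro i
    have := hgd (t + 1) ht't le_rfl i
    have hle : ((t + 1 - t' : ℕ) : ℝ) ≤ (m : ℝ) := by exact_mod_cast htm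
    have hnn : (0 : ℝ) ≤ 2 * η t * G := mul_nonneg (by linarith [hηpos t]) hGnn
    calc ‖x i - ψ'‖ ≤ ((t + 1 - t' : ℕ) : ℝ) * (2 * η t * G) := this
      _ ≤ (m : ℝ) * (2 * η t * G) := by nlinarith
  -- variance bound: ∑ ‖y i‖² ≤ ∑ ‖x i - ψ'‖²
  have hvar : ∑ i, ‖y i‖ ^ 2 ≤ ∑ i, ‖x i - ψ'‖ ^ 2 := by
    have per : ∀ i, ‖x i - ψ'‖ ^ 2
        = ‖y i‖ ^ 2 + (2 * (inner ℝ (y i) (ψ - ψ') : ℝ) + ‖ψ - ψ'‖ ^ 2) := by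
      intro i
      have hd : x i - ψ' = y i + (ψ - ψ') := by rw [hy]; exact (sub_add_sub_cancel _ _ _).symm
      rw [hd, norm_add_sq_real]; ring
    have hsum' : ∑ i, ‖x i - ψ'‖ ^ 2
        = ∑ i, ‖y i‖ ^ 2 + ∑ i, (2 * (inner ℝ (y i) (ψ - ψ') : ℝ) + ‖ψ - ψ'‖ ^ 2) := by
      rw [← Finset.sum_add_distrib]
      exact Finset.sum_congr rfl fun i _ => per i
    have hrest : ∑ i, (2 * (inner ℝ (y i) (ψ - ψ') : ℝ) + ‖ψ - ψ'‖ ^ 2)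
        = (N : ℝ) * ‖ψ - ψ'‖ ^ 2 := by
      rw [Finset.sum_add_distrib, Finset.sum_const, Finset.card_univ, Fintype.card_fin]
      have hz : ∑ i, 2 * (inner ℝ (y i) (ψ - ψ') : ℝ) = 0 := by
        rw [← Finset.mul_sum, ← sum_inner, hsum0, inner_zero_left, mul_zero]
      rw [hz, zero_add, nsmul_eq_mul]
    rw [hsum', hrest]
    have hpos : (0 : ℝ) ≤ (N : ℝ) * ‖ψ - ψ'‖ ^ 2 := by positivity
    linarith
  -- counts
  set C1 : ℝ := ((N - 1).choose (M - 1) : ℝ) with hC1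
  set c2 : ℝ := (if 2 ≤ M then ((N - 2).choose (M - 2) : ℝ) else 0) with hc2
  set P := (Finset.univ : Finset (Fin N)).powersetCard M with hPdef
  have hcount : ∀ i j : Fin N,
      ((P.filter (fun S => i ∈ S ∧ j ∈ S)).card : ℝ) = if i = j then C1 else c2 := by
    intro i j
    by_cases hij : i = j
    · subst hij
      rw [if_pos rfl, hC1]
      have heq : (P.filter (fun S => i ∈ S ∧ i ∈ S))
          = P.filter (fun S => ({i} : Finset (Fin N)) ⊆ S) := by
        apply Finset.filter_congr; intro S _; simp
      rw [heq, hPdef, count_superset12 ({i} : Finset (Fin N)) M (by simpa using hM1)]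
      simp
    · rw [if_neg hij, hc2]
      have hT : ({i, j} : Finset (Fin N)).card = 2 := by
        rw [Finset.card_insert_of_notMem (by simpa using hij), Finset.card_singleton]
      have heq : (P.filter (fun S => i ∈ S ∧ j ∈ S))
          = P.filter (fun S => ({i, j} : Finset (Fin N)) ⊆ S) := by
        apply Finset.filter_congr; intro S _
        simp [Finset.insert_subset_iff]
      rw [heq]
      by_cases h2 : 2 ≤ M
      · rw [if_pos h2, hPdef, count_superset12 ({i, j} : Finset (Fin N)) M (hT ▸ h2), hT]
        simp
      · rw [if_neg h2]
        norm_cast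
        rw [Finset.card_eq_zero, Finset.filter_eq_empty_iff]
        intro S hS
        rw [hPdef, Finset.mem_powersetCard] at hS
        intro hsub
        have h1 := Finset.card_le_card hsub
        omega
  -- key identity
  have hkey : ∑ S ∈ P, ‖∑ i ∈ S, y i‖ ^ 2 = (C1 - c2) * ∑ i, ‖y i‖ ^ 2 := by
    rw [hPdef]
    exact key_sum12 y M C1 c2 (by simpa [hPdef, Fintype.card_fin] using hcount) hsum0
  -- rewrite summands
  have hsummand : ∀ S ∈ P, ‖((M : ℝ)⁻¹ • ∑ i ∈ S, x i) - ψ‖ ^ 2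
      = ((M : ℝ)⁻¹) ^ 2 * ‖∑ i ∈ S, y i‖ ^ 2 := by
    intro S hS
    have hScard : S.card = M := (Finset.mem_powersetCard.mp hS).2
    have hrw : ((M : ℝ)⁻¹ • ∑ i ∈ S, x i) - ψ = (M : ℝ)⁻¹ • ∑ i ∈ S, y i := by
      simp only [hy, Finset.sum_sub_distrib, Finset.sum_const, hScard, smul_sub]
      rw [← Nat.cast_smul_eq_nsmul ℝ, smul_smul, inv_mul_cancel₀ hMne, one_smul]
    rw [hrw, norm_smul, Real.norm_eq_abs, abs_of_pos (inv_pos.mpr hMR), mul_pow]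
  have hLHS : (((Finset.univ : Finset (Fin N)).powersetCard M).card : ℝ)⁻¹ *
      ∑ S ∈ (Finset.univ : Finset (Fin N)).powersetCard M,
        ‖((M : ℝ)⁻¹ • ∑ i ∈ S, θ (t + 1) i) - (N : ℝ)⁻¹ • ∑ i, θ (t + 1) i‖ ^ 2
      = ((N.choose M : ℝ))⁻¹ * (((M : ℝ)⁻¹) ^ 2 * ((C1 - c2) * ∑ i, ‖y i‖ ^ 2)) := by
    have hcardP : (((Finset.univ : Finset (Fin N)).powersetCard M).card : ℝ) = (N.choose M : ℝ) := by
      rw [Finset.card_powersetCard, Finset.card_univ, Fintype.card_fin]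
    rw [hcardP]
    congr 1
    calc ∑ S ∈ (Finset.univ : Finset (Fin N)).powersetCard M,
          ‖((M : ℝ)⁻¹ • ∑ i ∈ S, θ (t + 1) i) - (N : ℝ)⁻¹ • ∑ i, θ (t + 1) i‖ ^ 2
        = ∑ S ∈ P, ((M : ℝ)⁻¹) ^ 2 * ‖∑ i ∈ S, y i‖ ^ 2 := by
          refine Finset.sum_congr (by rw [hPdef]) fun S hS => ?_
          exact hsummand S hS
      _ = ((M : ℝ)⁻¹) ^ 2 * ∑ S ∈ P, ‖∑ i ∈ S, y i‖ ^ 2 := (Finset.mul_sum _ _ _).symm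
      _ = ((M : ℝ)⁻¹) ^ 2 * ((C1 - c2) * ∑ i, ‖y i‖ ^ 2) := by rw [hkey]
  rw [hLHS]
  -- binomial arithmetic
  have hcoef : ((N.choose M : ℝ))⁻¹ * (((M : ℝ)⁻¹) ^ 2 * (C1 - c2))
      = ((N : ℝ) - (M : ℝ)) / ((M : ℝ) * (N : ℝ) * ((N : ℝ) - 1)) := by
    rw [hC1, hc2]; exact coefEq12 N M hN hM1 hMN
  -- final computation
  have hT : ∑ i, ‖y i‖ ^ 2 ≤ (N : ℝ) * ((m : ℝ) * (2 * η t * G)) ^ 2 := by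
    calc ∑ i, ‖y i‖ ^ 2 ≤ ∑ i, ‖x i - ψ'‖ ^ 2 := hvar
      _ ≤ ∑ _i : Fin N, ((m : ℝ) * (2 * η t * G)) ^ 2 := by
          refine Finset.sum_le_sum fun i _ => ?_
          have := hxb i
          have hnn : (0 : ℝ) ≤ ‖x i - ψ'‖ := norm_nonneg _
          nlinarith
      _ = (N : ℝ) * ((m : ℝ) * (2 * η t * G)) ^ 2 := by
          rw [Finset.sum_const, Finset.card_univ, Fintype.card_fin, nsmul_eq_mul]
  have hcoefnn : (0 : ℝ) ≤ ((N : ℝ) - (M : ℝ)) / ((M : ℝ) * (N : ℝ) * ((N : ℝ) - 1)) := by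
    apply div_nonneg
    · have : (M : ℝ) ≤ (N : ℝ) := by exact_mod_cast hMN
      linarith
    · positivity
  have hrearr : ((N.choose M : ℝ))⁻¹ * (((M : ℝ)⁻¹) ^ 2 * ((C1 - c2) * ∑ i, ‖y i‖ ^ 2))
      = (((N : ℝ) - (M : ℝ)) / ((M : ℝ) * (N : ℝ) * ((N : ℝ) - 1))) * ∑ i, ‖y i‖ ^ 2 := by
    rw [← hcoef]; ring
  rw [hrearr]
  calc (((N : ℝ) - (M : ℝ)) / ((M : ℝ) * (N : ℝ) * ((N : ℝ) - 1))) * ∑ i, ‖y i‖ ^ 2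
      ≤ (((N : ℝ) - (M : ℝ)) / ((M : ℝ) * (N : ℝ) * ((N : ℝ) - 1)))
        * ((N : ℝ) * ((m : ℝ) * (2 * η t * G)) ^ 2) := by
        exact mul_le_mul_of_nonneg_left hT hcoefnn
    _ = 4 * (N : ℝ) / ((M : ℝ) * ((N : ℝ) - 1)) * (1 - (M : ℝ) / (N : ℝ)) *
          η t ^ 2 * (m : ℝ) ^ 2 * G ^ 2 :=
        finalEq12 (N : ℝ) (M : ℝ) (m : ℝ) (η t) G hMne hNne (ne_of_gt hN1)
end

section
/- Let B ≥ 0, μ > 0, β > 1/μ, γ > 0, and let (d_t)_{t≥1} be a sequence of nonnegative reals satisfying βμ ≤ 1 + γ and, for all t ≥ 1, d_{t+1} ≤ (1 − βμ/(t+γ)) d_t + β²B/(t+γ)². Define v = max{ β²B/(βμ − 1), (γ+1) d_1 }. Then d_t ≤ v/(γ + t) for all t ≥ 1. -/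
/-- Standard recursion lemma: if d_{t+1} ≤ (1 − βμ/(t+γ)) d_t + β²B/(t+γ)²,
then d_t ≤ v/(γ+t) with v = max{β²B/(βμ−1), (γ+1)d₁}. -/
theorem stmt15 (B μ β γ : ℝ) (hB : 0 ≤ B) (hμ : 0 < μ) (hβ : 1 / μ < β)
    (hγ : 0 < γ) (hβμγ : β * μ ≤ 1 + γ)
    (d : ℕ → ℝ) (hd : ∀ t, 1 ≤ t → 0 ≤ d t)
    (hrec : ∀ t : ℕ, 1 ≤ t →
      d (t + 1) ≤ (1 - β * μ / ((t : ℝ) + γ)) * d t + β ^ 2 * B / ((t : ℝ) + γ) ^ 2)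
    (v : ℝ) (hv : v = max (β ^ 2 * B / (β * μ - 1)) ((γ + 1) * d 1)) :
    ∀ t : ℕ, 1 ≤ t → d t ≤ v / (γ + (t : ℝ)) := by
  have hβμ1 : 1 < β * μ := by
    rw [div_lt_iff₀ hμ] at hβ; linarith
  have hv0 : 0 ≤ v := by
    rw [hv]
    exact le_trans (div_nonneg (by positivity) (by linarith)) (le_max_left _ _)
  have hvB : β ^ 2 * B ≤ v * (β * μ - 1) := by
    rw [← div_le_iff₀ (by linarith)]
    rw [hv]; exact le_max_left _ _
  intro t ht
  induction t, ht using Nat.le_induction with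
  | base =>
    rw [le_div_iff₀ (by push_cast; linarith)]
    have : (γ + 1) * d 1 ≤ v := by rw [hv]; exact le_max_right _ _
    push_cast; linarith
  | succ t ht ih =>
    set a : ℝ := (t : ℝ) + γ with ha_def
    have ha1 : 1 + γ ≤ a := by
      have : (1 : ℝ) ≤ (t : ℝ) := by exact_mod_cast ht
      simp [ha_def]; linarith
    have ha0 : 0 < a := by linarith
    have hcoef : 0 ≤ 1 - β * μ / a := by
      rw [sub_nonneg, div_le_one ha0]; linarith
    have step : d (t + 1) ≤ (1 - β * μ / a) * (v / a) + β ^ 2 * B / a ^ 2 := by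
      refine le_trans (hrec t ht) ?_
      have hva : d t ≤ v / a := by
        rw [show a = γ + (t : ℝ) by rw [ha_def]; ring]; exact ih
      have := mul_le_mul_of_nonneg_left hva hcoef
      linarith
    have key : (1 - β * μ / a) * (v / a) + β ^ 2 * B / a ^ 2 ≤ v / (a + 1) := by
      rw [show (1 - β * μ / a) * (v / a) + β ^ 2 * B / a ^ 2
          = ((a - β * μ) * v + β ^ 2 * B) / a ^ 2 by field_simp,
        div_le_div_iff₀ (by positivity) (by linarith)]
      nlinarith [mul_nonneg (sub_nonneg.2 hvB) ha0.le, hv0, ha0]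
    have : γ + ((t : ℕ) + 1 : ℕ) = a + 1 := by push_cast; rw [ha_def]; ring
    push_cast at this ⊢
    rw [show γ + ((t : ℝ) + 1) = a + 1 by rw [ha_def]; ring]
    linarith
end

section
/- Let B ≥ 0, μ > 0, γ ≥ 1, set β = 2/μ, and let (d_t)_{t≥1} be a sequence of nonnegative reals satisfying, for all t ≥ 1, d_{t+1} ≤ (1 − 2/(t+γ)) d_t + 4B/(μ²(t+γ)²). Then for all t ≥ 1, d_t ≤ (1/(γ + t)) ( 4B/μ² + (γ+1) d_1 ). -/
/-- Specialization of the recursion lemma with β = 2/μ: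
d_t ≤ (1/(γ+t))(4B/μ² + (γ+1)d₁). -/
theorem stmt16 (B μ γ : ℝ) (hB : 0 ≤ B) (hμ : 0 < μ) (hγ : 1 ≤ γ)
    (d : ℕ → ℝ) (hd : ∀ t, 1 ≤ t → 0 ≤ d t)
    (hrec : ∀ t : ℕ, 1 ≤ t →
      d (t + 1) ≤ (1 - 2 / ((t : ℝ) + γ)) * d t + 4 * B / (μ ^ 2 * ((t : ℝ) + γ) ^ 2)) :
    ∀ t : ℕ, 1 ≤ t →
      d t ≤ 1 / (γ + (t : ℝ)) * (4 * B / μ ^ 2 + (γ + 1) * d 1) := by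
  have hμ2 : (0:ℝ) < μ ^ 2 := by positivity
  have hBμ : 0 ≤ 4 * B / μ ^ 2 := by positivity
  have hd1 : 0 ≤ d 1 := hd 1 le_rfl
  set C : ℝ := 4 * B / μ ^ 2 + (γ + 1) * d 1 with hC
  have hCnn : 0 ≤ C := by positivity
  have hBC : 4 * B / μ ^ 2 ≤ C := by nlinarith
  intro t ht
  induction t, ht using Nat.le_induction with
  | base =>
    have h1 : (0:ℝ) < γ + 1 := by linarith
    push_cast
    rw [div_mul_eq_mul_div, le_div_iff₀ h1, hC]
    nlinarith
  | succ n hn ih =>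
    have ih := ih
    have hs : (2:ℝ) ≤ (n:ℝ) + γ := by
      have : (1:ℝ) ≤ (n:ℝ) := by exact_mod_cast hn
      linarith
    have hs0 : (0:ℝ) < (n:ℝ) + γ := by linarith
    have hrecn := hrec n hn
    have hfac : 0 ≤ 1 - 2 / ((n:ℝ) + γ) := by
      rw [sub_nonneg, div_le_one hs0]; linarith
    have key : (1 - 2 / ((n:ℝ) + γ)) * (1 / (γ + (n:ℝ)) * C) + 4 * B / (μ ^ 2 * ((n:ℝ) + γ) ^ 2)
        ≤ 1 / (γ + ((n:ℝ) + 1)) * C := by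
      have h1 : 4 * B / (μ ^ 2 * ((n:ℝ) + γ) ^ 2) ≤ C / ((n:ℝ) + γ) ^ 2 := by
        rw [div_le_div_iff₀ (by positivity) (by positivity)]
        calc 4 * B * ((n:ℝ) + γ) ^ 2 = (4 * B / μ ^ 2) * (μ ^ 2 * ((n:ℝ) + γ) ^ 2) := by
              field_simp
          _ ≤ C * (μ ^ 2 * ((n:ℝ) + γ) ^ 2) := by
              apply mul_le_mul_of_nonneg_right hBC; positivity
      have h2 : (1 - 2 / ((n:ℝ) + γ)) * (1 / (γ + (n:ℝ)) * C) + C / ((n:ℝ) + γ) ^ 2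
          ≤ 1 / (γ + ((n:ℝ) + 1)) * C := by
        have e : (1 - 2 / ((n:ℝ) + γ)) * (1 / (γ + (n:ℝ)) * C) + C / ((n:ℝ) + γ) ^ 2
            = C * (((n:ℝ) + γ) - 1) / ((n:ℝ) + γ) ^ 2 := by
          field_simp
          ring
        have e2 : 1 / (γ + ((n:ℝ) + 1)) * C = C / (γ + ((n:ℝ) + 1)) := by ring
        rw [e, e2, div_le_div_iff₀ (by positivity) (by linarith)]
        nlinarith
      linarith
    calc d (n + 1) ≤ (1 - 2 / ((n:ℝ) + γ)) * d n + 4 * B / (μ ^ 2 * ((n:ℝ) + γ) ^ 2) := by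
          exact_mod_cast hrecn
      _ ≤ (1 - 2 / ((n:ℝ) + γ)) * (1 / (γ + (n:ℝ)) * C) + 4 * B / (μ ^ 2 * ((n:ℝ) + γ) ^ 2) := by
          have := mul_le_mul_of_nonneg_left ih hfac; linarith
      _ ≤ 1 / (γ + ((n:ℝ) + 1)) * C := key
      _ = 1 / (γ + ((n + 1 : ℕ) : ℝ)) * C := by push_cast; ring
end
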